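/- Let V₈ be the Wagner graph (Möbius ladder on 8 vertices): the graph with vertex set Z/8Z in which i and j are adjacent if and only if i − j ≡ ±1 (mod 8) or i − j ≡ 4 (mod 8). Then α₂^{DP}(V₈) ≥ 6, and V₈ is partially DP-nice. -/

import Mathlib

open SimpleGraph

/-- `DPCover G H L` means `(L, H)` is a cover of the graph `G`:
(1) the sets `L u` partition `V(H)`; (2) each `H[L u]` is complete;
(3) for each edge `uv` of `G`, the edges of `H` between `L u` and `L v` form a matching;
(4) there are no edges of `H` between lists of distinct non-adjacent vertices. -/
structure DPCover {V : Type} (G : SimpleGraph V) {W : Type} (H : SimpleGraph W)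
    (L : V → Finset W) : Prop where
  partition : ∀ w : W, ∃! v : V, w ∈ L v
  cliques : ∀ v : V, ∀ a ∈ L v, ∀ b ∈ L v, a ≠ b → H.Adj a b
  matching : ∀ ⦃u v : V⦄, G.Adj u v → ∀ a ∈ L u, ∀ b ∈ L v, ∀ b' ∈ L v,
      H.Adj a b → H.Adj a b' → b = b'
  nonadj : ∀ ⦃u v : V⦄, u ≠ v → ¬ G.Adj u v → ∀ a ∈ L u, ∀ b ∈ L v, ¬ H.Adj a b

/-- A finset is independent in `H` if no two of its elements are adjacent. -/
def IsIndepFinset {W : Type} (H : SimpleGraph W) (S : Finset W) : Prop :=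
  ∀ a ∈ S, ∀ b ∈ S, ¬ H.Adj a b

/-- The independence number of `H`. -/
noncomputable def indepNum {W : Type} [Fintype W] (H : SimpleGraph W) : ℕ :=
  sSup {n : ℕ | ∃ S : Finset W, IsIndepFinset H S ∧ S.card = n}

/-- The DP-chromatic number of `G`: the least `m` such that every `m`-fold cover `(L, H)`
of `G` admits an `H`-coloring, i.e. an independent set in `H` of size `|V(G)|`. -/
noncomputable def chiDP {V : Type} [Fintype V] (G : SimpleGraph V) : ℕ :=
  sInf {m : ℕ | ∀ (W : Type) (_ : Fintype W) (H : SimpleGraph W) (L : V → Finset W),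
    DPCover G H L → (∀ v, (L v).card = m) →
    ∃ S : Finset W, IsIndepFinset H S ∧ S.card = Fintype.card V}

/-- The partial DP `t`-chromatic number of `G`: the minimum of the independence number
`α(H)` over all `t`-fold covers `(L, H)` of `G`. -/
noncomputable def alphaDP {V : Type} [Fintype V] (G : SimpleGraph V) (t : ℕ) : ℕ :=
  sInf {n : ℕ | ∃ (W : Type) (_ : Fintype W) (H : SimpleGraph W) (L : V → Finset W),
    DPCover G H L ∧ (∀ v, (L v).card = t) ∧ _root_.indepNum H = n}

/-- A graph `G` is partially DP-nice if `α_t^{DP}(G) ≥ t|V(G)|/χ_DP(G)` for all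
`t ∈ {1, …, χ_DP(G)}`. -/
def PartiallyDPNice {V : Type} [Fintype V] (G : SimpleGraph V) : Prop :=
  ∀ t : ℕ, 1 ≤ t → t ≤ chiDP G →
    (t * Fintype.card V : ℚ) / (chiDP G : ℚ) ≤ (alphaDP G t : ℚ)

/-- The Wagner graph (Möbius ladder) `V₈` on `ℤ/8ℤ`: `i` and `j` are adjacent iff
`i − j ≡ ±1 (mod 8)` or `i − j ≡ 4 (mod 8)`. -/
def wagnerGraph : SimpleGraph (ZMod 8) where
  Adj i j := i - j = 1 ∨ i - j = -1 ∨ i - j = 4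
  symm := by
    have h : ∀ i j : ZMod 8, (i - j = 1 ∨ i - j = -1 ∨ i - j = 4) →
        (j - i = 1 ∨ j - i = -1 ∨ j - i = 4) := by decide
    exact ⟨fun i j hij => h i j hij⟩
  loopless := by
    have h : ∀ i : ZMod 8, ¬ (i - i = 1 ∨ i - i = -1 ∨ i - i = 4) := by decide
    exact ⟨fun i hi => h i hi⟩

set_option linter.unusedVariables false

-- generic product cover
def exH {V : Type} (G : SimpleGraph V) (t : ℕ) [DecidableEq V] : SimpleGraph (V × Fin t) where
  Adj x y := (x.1 = y.1 ∧ x.2 ≠ y.2) ∨ (G.Adj x.1 y.1 ∧ x.2 = y.2)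
  symm := by
    refine ⟨?_⟩
    rintro ⟨u,i⟩ ⟨v,j⟩ (⟨h1,h2⟩|⟨h1,h2⟩)
    · exact Or.inl ⟨h1.symm, h2.symm⟩
    · exact Or.inr ⟨h1.symm, h2.symm⟩
  loopless := by refine ⟨?_⟩; rintro ⟨u,i⟩ (⟨h1,h2⟩|⟨h1,h2⟩); exact h2 rfl; exact G.loopless.irrefl u h1

def exL {V : Type} (t : ℕ) [DecidableEq V] : V → Finset (V × Fin t) :=
  fun v => Finset.univ.image (fun i => (v, i))

lemma mem_exL {V : Type} {t : ℕ} [DecidableEq V] {v : V} {w : V × Fin t} :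
    w ∈ exL t v ↔ w.1 = v := by
  constructor
  · intro h
    obtain ⟨i, _, h⟩ := Finset.mem_image.mp h
    rw [← h]
  · intro h
    exact Finset.mem_image.mpr ⟨w.2, Finset.mem_univ _, by rw [← h]⟩

lemma exCover {V : Type} (G : SimpleGraph V) (t : ℕ) [DecidableEq V] :
    DPCover G (exH G t) (exL t) where
  partition := by
    intro w
    refine ⟨w.1, mem_exL.mpr rfl, fun v hv => (mem_exL.mp hv).symm⟩
  cliques := by
    intro v a ha b hb hab
    have h1 : a.1 = v := mem_exL.mp ha
    have h2 : b.1 = v := mem_exL.mp hb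
    refine Or.inl ⟨h1.trans h2.symm, fun h => hab ?_⟩
    exact Prod.ext (h1.trans h2.symm) h
  matching := by
    intro u v huv a ha b hb b' hb' h1 h2
    have hu : a.1 = u := mem_exL.mp ha
    have hv : b.1 = v := mem_exL.mp hb
    have hv' : b'.1 = v := mem_exL.mp hb'
    have hne : u ≠ v := G.ne_of_adj huv
    rcases h1 with ⟨e1,_⟩|⟨_,e2⟩
    · exact absurd (hu ▸ hv ▸ e1) hne
    rcases h2 with ⟨e1,_⟩|⟨_,e2'⟩
    · exact absurd (hu ▸ hv' ▸ e1) hne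
    exact Prod.ext (hv.trans hv'.symm) (e2 ▸ e2' ▸ rfl)
  nonadj := by
    intro u v hne hnadj a ha b hb h
    have hu : a.1 = u := mem_exL.mp ha
    have hv : b.1 = v := mem_exL.mp hb
    rcases h with ⟨e1,_⟩|⟨e1,_⟩
    · exact hne (hu ▸ hv ▸ e1)
    · exact hnadj (hu ▸ hv ▸ e1)

lemma exL_card {V : Type} (t : ℕ) [DecidableEq V] (v : V) : (exL (V := V) t v).card = t := by
  rw [exL, Finset.card_image_of_injective _ (fun i j h => (Prod.mk.injEq _ _ _ _).mp h |>.2),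
    Finset.card_univ, Fintype.card_fin]

-- independence number lower bound
lemma indepNum_ge {W : Type} [Fintype W] (H : SimpleGraph W) (S : Finset W)
    (hS : IsIndepFinset H S) : S.card ≤ _root_.indepNum H := by
  apply le_csSup
  · refine ⟨Fintype.card W, fun n hn => ?_⟩
    obtain ⟨T, _, hT⟩ := hn
    exact hT ▸ Finset.card_le_univ T
  · exact ⟨S, hS, rfl⟩

section Infra
variable {W : Type} {H : SimpleGraph W} {L : ZMod 8 → Finset W}

instance : DecidableRel wagnerGraph.Adj :=
  fun i j => decidable_of_iff (i - j = 1 ∨ i - j = -1 ∨ i - j = 4) Iff.rfl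

lemma indep_of_choice [DecidableEq W] (cov : DPCover wagnerGraph H L) (S : Finset (ZMod 8)) (g : ZMod 8 → W)
    (hg : ∀ v ∈ S, g v ∈ L v)
    (hadj : ∀ u ∈ S, ∀ v ∈ S, wagnerGraph.Adj u v → ¬H.Adj (g u) (g v)) :
    IsIndepFinset H (S.image g) ∧ (S.image g).card = S.card := by
  constructor
  · intro x hx y hy hxy
    obtain ⟨u, hu, rfl⟩ := Finset.mem_image.mp hx
    obtain ⟨v, hv, rfl⟩ := Finset.mem_image.mp hy
    by_cases huv : u = v
    · subst huv; exact H.loopless.irrefl _ hxy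
    by_cases hG : wagnerGraph.Adj u v
    · exact hadj u hu v hv hG hxy
    · exact cov.nonadj huv hG _ (hg u hu) _ (hg v hv) hxy
  · apply Finset.card_image_of_injOn
    intro u hu v hv huv
    by_contra hne
    obtain ⟨w, -, hwu⟩ := cov.partition (g u)
    exact hne (hwu u (hg u hu) ▸ hwu v (huv ▸ hg v hv) ▸ rfl)

lemma blocked_card (cov : DPCover wagnerGraph H L) {u v : ZMod 8} (huv : wagnerGraph.Adj u v)
    {x : W} (hx : x ∈ L u) [DecidablePred (fun b => H.Adj x b)] :
    ((L v).filter (fun b => H.Adj x b)).card ≤ 1 := by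
  apply Finset.card_le_one.mpr
  intro b hb b' hb'
  simp only [Finset.mem_filter] at hb hb'
  exact cov.matching huv x hx b hb.1 b' hb'.1 hb.2 hb'.2

lemma exists_avoid2 (cov : DPCover wagnerGraph H L) {u1 u2 v : ZMod 8}
    (h1 : wagnerGraph.Adj u1 v) (h2 : wagnerGraph.Adj u2 v)
    {x y : W} (hx : x ∈ L u1) (hy : y ∈ L u2) (hc : 3 ≤ (L v).card) :
    ∃ b ∈ L v, ¬H.Adj x b ∧ ¬H.Adj y b := by
  classical
  have hsub : (L v).filter (fun b => H.Adj x b ∨ H.Adj y b) ⊆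
      (L v).filter (fun b => H.Adj x b) ∪ (L v).filter (fun b => H.Adj y b) := by
    intro b hb
    simp only [Finset.mem_filter, Finset.mem_union] at hb ⊢
    tauto
  have hcard : ((L v).filter (fun b => H.Adj x b ∨ H.Adj y b)).card ≤ 2 := by
    calc _ ≤ _ := Finset.card_le_card hsub
    _ ≤ _ := Finset.card_union_le _ _
    _ ≤ 2 := by
      have := blocked_card cov h1 hx (v := v)
      have := blocked_card cov h2 hy (v := v)
      omega
  have hne : ((L v).filter (fun b => ¬(H.Adj x b ∨ H.Adj y b))).Nonempty := by
    rw [← Finset.card_pos]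
    have := Finset.card_filter_add_card_filter_not
      (s := L v) (p := fun b => H.Adj x b ∨ H.Adj y b)
    omega
  obtain ⟨b, hb⟩ := hne
  simp only [Finset.mem_filter] at hb
  exact ⟨b, hb.1, not_or.mp hb.2⟩

lemma exists_avoid1 (cov : DPCover wagnerGraph H L) {u v : ZMod 8}
    (h1 : wagnerGraph.Adj u v) {x : W} (hx : x ∈ L u) (hc : 2 ≤ (L v).card) :
    ∃ b ∈ L v, ¬H.Adj x b := by
  classical
  have hcard := blocked_card cov h1 hx (v := v)
  have hne : ((L v).filter (fun b => ¬H.Adj x b)).Nonempty := by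
    rw [← Finset.card_pos]
    have := Finset.card_filter_add_card_filter_not
      (s := L v) (p := fun b => H.Adj x b)
    omega
  obtain ⟨b, hb⟩ := hne
  simp only [Finset.mem_filter] at hb
  exact ⟨b, hb.1, hb.2⟩

end Infra

section Brooks
variable {W : Type} {H : SimpleGraph W} {L : ZMod 8 → Finset W}

lemma brooks_start (cov : DPCover wagnerGraph H L) (h3 : ∀ v, (L v).card = 3) :
    ∃ a ∈ L 0, ∃ c ∈ L 2,
      ∀ (inst : DecidablePred (fun z => H.Adj a z ∨ H.Adj c z)),
      ((L 1).filter (fun z => H.Adj a z ∨ H.Adj c z)).card ≤ 1 := by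
  classical
  have e01 : wagnerGraph.Adj 0 1 := by decide
  have e21 : wagnerGraph.Adj 2 1 := by decide
  have e10 : wagnerGraph.Adj 1 0 := by decide
  have hO : (L 0).Nonempty := by rw [← Finset.card_pos, h3]; omega
  have hC : (L 2).Nonempty := by rw [← Finset.card_pos, h3]; omega
  -- key: the filter is contained in (blocked a) ∪ (blocked c)
  have hsub : ∀ (a c : W) (inst : DecidablePred (fun z => H.Adj a z ∨ H.Adj c z)),
      (L 1).filter (fun z => H.Adj a z ∨ H.Adj c z) ⊆
      (L 1).filter (fun z => H.Adj a z) ∪ (L 1).filter (fun z => H.Adj c z) := by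
    intro a c inst z hz
    simp only [Finset.mem_filter, Finset.mem_union] at hz ⊢
    tauto
  by_cases hA : ∃ a ∈ L 0, ∀ z ∈ L 1, ¬H.Adj a z
  · obtain ⟨a, ha, hFa⟩ := hA
    obtain ⟨c, hc⟩ := hC
    refine ⟨a, ha, c, hc, fun inst => ?_⟩
    calc ((L 1).filter (fun z => H.Adj a z ∨ H.Adj c z)).card
        ≤ ((L 1).filter (fun z => H.Adj a z) ∪ (L 1).filter (fun z => H.Adj c z)).card :=
          Finset.card_le_card (hsub a c inst)
      _ ≤ _ := Finset.card_union_le _ _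
      _ ≤ 1 := by
          have h1 : ((L 1).filter (fun z => H.Adj a z)).card = 0 := by
            rw [Finset.card_eq_zero, Finset.filter_eq_empty_iff]; exact hFa
          have h2 := blocked_card cov e21 hc (v := 1)
          omega
  push_neg at hA
  by_cases hB : ∃ c ∈ L 2, ∀ z ∈ L 1, ¬H.Adj c z
  · obtain ⟨c, hc, hFc⟩ := hB
    obtain ⟨a, ha⟩ := hO
    refine ⟨a, ha, c, hc, fun inst => ?_⟩
    calc ((L 1).filter (fun z => H.Adj a z ∨ H.Adj c z)).card
        ≤ ((L 1).filter (fun z => H.Adj a z) ∪ (L 1).filter (fun z => H.Adj c z)).card :=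
          Finset.card_le_card (hsub a c inst)
      _ ≤ _ := Finset.card_union_le _ _
      _ ≤ 1 := by
          have h2 : ((L 1).filter (fun z => H.Adj c z)).card = 0 := by
            rw [Finset.card_eq_zero, Finset.filter_eq_empty_iff]; exact hFc
          have h1 := blocked_card cov e01 ha (v := 1)
          omega
  push_neg at hB
  obtain ⟨c₀, hc₀⟩ := hC
  obtain ⟨z₀, hz₀L, hz₀A⟩ := hB c₀ hc₀
  by_cases hA2 : ∃ a ∈ L 0, H.Adj a z₀
  · obtain ⟨a, ha, haz⟩ := hA2
    refine ⟨a, ha, c₀, hc₀, fun inst => ?_⟩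
    have hsub2 : (L 1).filter (fun z => H.Adj a z ∨ H.Adj c₀ z) ⊆ {z₀} := by
      intro z hz
      simp only [Finset.mem_filter] at hz
      rcases hz.2 with h | h
      · exact Finset.mem_singleton.mpr (cov.matching e01 a ha z hz.1 z₀ hz₀L h haz)
      · exact Finset.mem_singleton.mpr (cov.matching e21 c₀ hc₀ z hz.1 z₀ hz₀L h hz₀A)
    calc _ ≤ ({z₀} : Finset W).card := Finset.card_le_card hsub2
      _ = 1 := Finset.card_singleton _
  · push_neg at hA2
    exfalso
    -- every a ∈ L 0 has a partner in L 1 distinct from z₀; partners injective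
    have hpart : ∀ a ∈ L 0, ∃ z ∈ (L 1).erase z₀, H.Adj a z := by
      intro a ha
      obtain ⟨z, hzL, hzA⟩ := hA a ha
      refine ⟨z, Finset.mem_erase.mpr ⟨?_, hzL⟩, hzA⟩
      rintro rfl; exact hA2 a ha hzA
    choose p hpmem hpadj using hpart
    have : (L 0).card ≤ ((L 1).erase z₀).card := by
      apply Finset.card_le_card_of_injOn (fun a => if h : a ∈ L 0 then p a h else a)
      · intro a ha; simp only [Finset.mem_coe] at ha ⊢; simp only [dif_pos ha]; exact hpmem a ha
      · intro a ha a' ha' heq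
        simp only [Finset.mem_coe] at ha ha'
        simp only [dif_pos ha, dif_pos ha'] at heq
        have h1 : H.Adj (p a ha) a := H.adj_symm (hpadj a ha)
        have h2 : H.Adj (p a ha) a' := heq ▸ H.adj_symm (hpadj a' ha')
        exact cov.matching e10 (p a ha) (Finset.mem_of_mem_erase (hpmem a ha)) a ha a' ha' h1 h2
    rw [h3, Finset.card_erase_of_mem hz₀L, h3] at this
    omega

lemma exists_avoid_final (cov : DPCover wagnerGraph H L) (h3 : ∀ v, (L v).card = 3)
    {a c z : W} (ha : a ∈ L 0) (hc : c ∈ L 2) (hz : z ∈ L 5)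
    (hac : ∀ (inst : DecidablePred (fun b => H.Adj a b ∨ H.Adj c b)),
      ((L 1).filter (fun b => H.Adj a b ∨ H.Adj c b)).card ≤ 1) :
    ∃ b ∈ L 1, ¬H.Adj a b ∧ ¬H.Adj c b ∧ ¬H.Adj z b := by
  classical
  have e51 : wagnerGraph.Adj 5 1 := by decide
  have hsub : (L 1).filter (fun b => H.Adj a b ∨ H.Adj c b ∨ H.Adj z b) ⊆
      (L 1).filter (fun b => H.Adj a b ∨ H.Adj c b) ∪ (L 1).filter (fun b => H.Adj z b) := by
    intro b hb
    simp only [Finset.mem_filter, Finset.mem_union] at hb ⊢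
    tauto
  have hcard : ((L 1).filter (fun b => H.Adj a b ∨ H.Adj c b ∨ H.Adj z b)).card ≤ 2 := by
    calc _ ≤ _ := Finset.card_le_card hsub
      _ ≤ _ := Finset.card_union_le _ _
      _ ≤ 2 := by
        have h1 := hac inferInstance
        have h2 := blocked_card cov e51 hz (v := 1)
        omega
  have hne : ((L 1).filter (fun b => ¬(H.Adj a b ∨ H.Adj c b ∨ H.Adj z b))).Nonempty := by
    rw [← Finset.card_pos]
    have := Finset.card_filter_add_card_filter_not
      (s := L 1) (p := fun b => H.Adj a b ∨ H.Adj c b ∨ H.Adj z b)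
    have := h3 1
    omega
  obtain ⟨b, hb⟩ := hne
  simp only [Finset.mem_filter, not_or] at hb
  exact ⟨b, hb.1, hb.2⟩

lemma brooks3 (cov : DPCover wagnerGraph H L) (h3 : ∀ v, (L v).card = 3) :
    ∃ S : Finset W, IsIndepFinset H S ∧ S.card = 8 := by
  classical
  obtain ⟨a, ha, c, hc, hac⟩ := brooks_start cov h3
  obtain ⟨d3, hd3, h3c⟩ := exists_avoid1 cov (show wagnerGraph.Adj 2 3 by decide) hc (by rw [h3]; omega)
  obtain ⟨d7, hd7, h7a, h73⟩ := exists_avoid2 cov (show wagnerGraph.Adj 0 7 by decide)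
    (show wagnerGraph.Adj 3 7 by decide) ha hd3 (by rw [h3])
  obtain ⟨d6, hd6, h6c, h67⟩ := exists_avoid2 cov (show wagnerGraph.Adj 2 6 by decide)
    (show wagnerGraph.Adj 7 6 by decide) hc hd7 (by rw [h3])
  obtain ⟨d4, hd4, h4a, h43⟩ := exists_avoid2 cov (show wagnerGraph.Adj 0 4 by decide)
    (show wagnerGraph.Adj 3 4 by decide) ha hd3 (by rw [h3])
  obtain ⟨d5, hd5, h54, h56⟩ := exists_avoid2 cov (show wagnerGraph.Adj 4 5 by decide)
    (show wagnerGraph.Adj 6 5 by decide) hd4 hd6 (by rw [h3])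
  obtain ⟨d1, hd1, h1a, h1c, h15⟩ := exists_avoid_final cov h3 ha hc hd5 hac
  set g : ZMod 8 → W := fun v => [a, d1, c, d3, d4, d5, d6, d7].getD v.val a with hg_def
  have hg : ∀ v ∈ Finset.univ, g v ∈ L v := by
    intro v _
    fin_cases v <;> assumption
  have hadj : ∀ u ∈ Finset.univ, ∀ v ∈ Finset.univ,
      wagnerGraph.Adj u v → ¬H.Adj (g u) (g v) := by
    have s3c : ¬H.Adj (g 2) (g 3) := h3c
    have s7a : ¬H.Adj (g 0) (g 7) := h7a
    have s73 : ¬H.Adj (g 3) (g 7) := h73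
    have s6c : ¬H.Adj (g 2) (g 6) := h6c
    have s67 : ¬H.Adj (g 7) (g 6) := h67
    have s4a : ¬H.Adj (g 0) (g 4) := h4a
    have s43 : ¬H.Adj (g 3) (g 4) := h43
    have s54 : ¬H.Adj (g 4) (g 5) := h54
    have s56 : ¬H.Adj (g 6) (g 5) := h56
    have s1a : ¬H.Adj (g 0) (g 1) := h1a
    have s1c : ¬H.Adj (g 2) (g 1) := h1c
    have s15 : ¬H.Adj (g 5) (g 1) := h15
    have t3c : ¬H.Adj (g 3) (g 2) := fun h => h3c (H.adj_symm h)
    have t7a : ¬H.Adj (g 7) (g 0) := fun h => h7a (H.adj_symm h)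
    have t73 : ¬H.Adj (g 7) (g 3) := fun h => h73 (H.adj_symm h)
    have t6c : ¬H.Adj (g 6) (g 2) := fun h => h6c (H.adj_symm h)
    have t67 : ¬H.Adj (g 6) (g 7) := fun h => h67 (H.adj_symm h)
    have t4a : ¬H.Adj (g 4) (g 0) := fun h => h4a (H.adj_symm h)
    have t43 : ¬H.Adj (g 4) (g 3) := fun h => h43 (H.adj_symm h)
    have t54 : ¬H.Adj (g 5) (g 4) := fun h => h54 (H.adj_symm h)
    have t56 : ¬H.Adj (g 5) (g 6) := fun h => h56 (H.adj_symm h)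
    have t1a : ¬H.Adj (g 1) (g 0) := fun h => h1a (H.adj_symm h)
    have t1c : ¬H.Adj (g 1) (g 2) := fun h => h1c (H.adj_symm h)
    have t15 : ¬H.Adj (g 1) (g 5) := fun h => h15 (H.adj_symm h)
    intro u _ v _ hG
    fin_cases u <;> fin_cases v <;>
      first
        | exact absurd hG (by unfold wagnerGraph; decide)
        | assumption
  obtain ⟨hind, hcard⟩ := indep_of_choice cov Finset.univ g hg hadj
  refine ⟨Finset.univ.image g, hind, ?_⟩
  rw [hcard]
  decide

end Brooks

section OneFold
variable {W : Type} {H : SimpleGraph W} {L : ZMod 8 → Finset W}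

lemma one3 (cov : DPCover wagnerGraph H L) (h1 : ∀ v, 1 ≤ (L v).card) :
    ∃ S : Finset W, IsIndepFinset H S ∧ S.card = 3 := by
  classical
  have hO : (L 0).Nonempty := Finset.card_pos.mp (h1 0)
  have hC : (L 2).Nonempty := Finset.card_pos.mp (h1 2)
  have hZ : (L 5).Nonempty := Finset.card_pos.mp (h1 5)
  obtain ⟨a, ha⟩ := hO
  obtain ⟨c, hc⟩ := hC
  obtain ⟨z, hz⟩ := hZ
  set g : ZMod 8 → W := fun v => [a, a, c, a, a, z, a, a].getD v.val a with hg_def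
  have hg : ∀ v ∈ ({0, 2, 5} : Finset (ZMod 8)), g v ∈ L v := by
    intro v hv
    fin_cases hv <;> assumption
  have hadj : ∀ u ∈ ({0, 2, 5} : Finset (ZMod 8)), ∀ v ∈ ({0, 2, 5} : Finset (ZMod 8)),
      wagnerGraph.Adj u v → ¬H.Adj (g u) (g v) := by
    intro u hu v hv hG
    fin_cases hu <;> fin_cases hv <;> exact absurd hG (by unfold wagnerGraph; decide)
  obtain ⟨hind, hcard⟩ := indep_of_choice cov {0, 2, 5} g hg hadj
  exact ⟨_, hind, by rw [hcard]; decide⟩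

end OneFold
def Mdec : Fin 7 → Fin 2 → Fin 2 → Bool
  | 0, _, _ => false
  | 1, i, j => i == 0 && j == 0
  | 2, i, j => i == 0 && j == 1
  | 3, i, j => i == 1 && j == 0
  | 4, i, j => i == 1 && j == 1
  | 5, i, j => i == j
  | 6, i, j => i != j

def sgn : Fin 7 → ℕ | 6 => 1 | _ => 0
def perf : Fin 7 → Bool := fun c => decide (5 ≤ c.val)
def two : List (Fin 2) := [0, 1]

def good5 (c0 c1 c2 c3 c4 : Fin 7) : Bool :=
  two.any fun a => two.any fun b => !Mdec c0 a b &&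
    (two.any fun d => !Mdec c1 b d && (two.any fun e => !Mdec c2 d e &&
      (two.any fun f => !Mdec c3 e f && !Mdec c4 a f)))

def bad5 (c0 c1 c2 c3 c4 : Fin 7) : Bool :=
  perf c0 && perf c1 && perf c2 && perf c3 && perf c4 &&
    ((sgn c0 + sgn c1 + sgn c2 + sgn c3 + sgn c4) % 2 == 0)

def good4 (c0 c1 c2 c3 : Fin 7) : Bool :=
  two.any fun a => two.any fun b => !Mdec c0 a b &&
    (two.any fun d => !Mdec c1 d b && (two.any fun e => !Mdec c2 d e && !Mdec c3 a e))

def bad4 (c0 c1 c2 c3 : Fin 7) : Bool :=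
  perf c0 && perf c1 && perf c2 && perf c3 &&
    ((sgn c0 + sgn c1 + sgn c2 + sgn c3) % 2 == 1)

-- spec extraction lemmas (non-decide)
lemma good5_spec {c0 c1 c2 c3 c4 : Fin 7} (h : good5 c0 c1 c2 c3 c4 = true) :
    ∃ a b d e f : Fin 2, Mdec c0 a b = false ∧ Mdec c1 b d = false ∧ Mdec c2 d e = false ∧
      Mdec c3 e f = false ∧ Mdec c4 a f = false := by
  simp only [good5, List.any_eq_true, Bool.and_eq_true, Bool.not_eq_true'] at h
  obtain ⟨a, -, b, -, h0, d, -, h1, e, -, h2, f, -, h3, h4⟩ := h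
  exact ⟨a, b, d, e, f, h0, h1, h2, h3, h4⟩

lemma good4_spec {c0 c1 c2 c3 : Fin 7} (h : good4 c0 c1 c2 c3 = true) :
    ∃ a b d e : Fin 2, Mdec c0 a b = false ∧ Mdec c1 d b = false ∧ Mdec c2 d e = false ∧
      Mdec c3 a e = false := by
  simp only [good4, List.any_eq_true, Bool.and_eq_true, Bool.not_eq_true'] at h
  obtain ⟨a, -, b, -, h0, d, -, h1, e, -, h2, h3⟩ := h
  exact ⟨a, b, d, e, h0, h1, h2, h3⟩

lemma bad5_spec {c0 c1 c2 c3 c4 : Fin 7} (h : bad5 c0 c1 c2 c3 c4 = true) :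
    (sgn c0 + sgn c1 + sgn c2 + sgn c3 + sgn c4) % 2 = 0 := by
  simp only [bad5, Bool.and_eq_true, beq_iff_eq] at h
  exact h.2

lemma bad4_spec {c0 c1 c2 c3 : Fin 7} (h : bad4 c0 c1 c2 c3 = true) :
    (sgn c0 + sgn c1 + sgn c2 + sgn c3) % 2 = 1 := by
  simp only [bad4, Bool.and_eq_true, beq_iff_eq] at h
  exact h.2

set_option maxHeartbeats 2000000 in
lemma lem5 : ∀ c0 c1 c2 c3 c4 : Fin 7,
    (good5 c0 c1 c2 c3 c4 || bad5 c0 c1 c2 c3 c4) = true := by decide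

set_option maxHeartbeats 1000000 in
lemma lem4 : ∀ c0 c1 c2 c3 : Fin 7, (good4 c0 c1 c2 c3 || bad4 c0 c1 c2 c3) = true := by decide

lemma ppm_code : ∀ N : Fin 2 → Fin 2 → Bool,
    (∀ i j j', N i j = true → N i j' = true → j = j') →
    (∀ i i' j, N i j = true → N i' j = true → i = i') →
    ∃ c : Fin 7, ∀ i j, N i j = Mdec c i j := by decide

section TwoFold
variable {W : Type} {H : SimpleGraph W} {L : ZMod 8 → Finset W}

lemma two6 (cov : DPCover wagnerGraph H L) (hL2 : ∀ v, (L v).card = 2) :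
    ∃ S : Finset W, IsIndepFinset H S ∧ S.card = 6 := by
  classical
  choose x y hxy hLeq using fun v => Finset.card_eq_two.mp (hL2 v)
  set ev : ZMod 8 → Fin 2 → W := fun v i => if i = 0 then x v else y v with hev_def
  have hmem : ∀ v i, ev v i ∈ L v := by
    intro v i
    rw [hLeq v]
    fin_cases i <;> simp [hev_def]
  have hinj : ∀ v i i', ev v i = ev v i' → i = i' := by
    intro v i i'
    fin_cases i <;> fin_cases i' <;> simp [hev_def] <;> intro h <;>
      first | rfl | exact absurd h (hxy v) | exact absurd h.symm (hxy v)
  have hcode : ∀ u v : ZMod 8, wagnerGraph.Adj u v →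
      ∃ c : Fin 7, ∀ i j, decide (H.Adj (ev u i) (ev v j)) = Mdec c i j := by
    intro u v huv
    apply ppm_code
    · intro i j j' h h'
      exact hinj v j j' (cov.matching huv (ev u i) (hmem u i) (ev v j) (hmem v j)
        (ev v j') (hmem v j') (of_decide_eq_true h) (of_decide_eq_true h'))
    · intro i i' j h h'
      exact hinj u i i' (cov.matching (wagnerGraph.adj_symm huv) (ev v j) (hmem v j)
        (ev u i) (hmem u i) (ev u i') (hmem u i')
        (H.adj_symm (of_decide_eq_true h)) (H.adj_symm (of_decide_eq_true h')))
  obtain ⟨k0, hk0⟩ := hcode 3 4 (by decide)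
  obtain ⟨k1, hk1⟩ := hcode 4 5 (by decide)
  obtain ⟨k2, hk2⟩ := hcode 5 6 (by decide)
  obtain ⟨k3, hk3⟩ := hcode 6 7 (by decide)
  obtain ⟨k4, hk4⟩ := hcode 3 7 (by decide)
  obtain ⟨k5, hk5⟩ := hcode 0 4 (by decide)
  obtain ⟨k6, hk6⟩ := hcode 0 7 (by decide)
  have hnadj : ∀ (u v : ZMod 8) (c : Fin 7) (i j : Fin 2),
      (∀ i j, decide (H.Adj (ev u i) (ev v j)) = Mdec c i j) → Mdec c i j = false →
      ¬H.Adj (ev u i) (ev v j) := by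
    intro u v c i j hc hf
    exact of_decide_eq_false ((hc i j).trans hf)
  by_cases g0 : good5 k0 k1 k2 k3 k4 = true
  · -- cycle 3-4-5-6-7 with chord 3-7, pendant 1 at 5
    obtain ⟨a, b, d, e, f, h0, h1, h2, h3, h4⟩ := good5_spec g0
    obtain ⟨d1, hd1, h15⟩ := exists_avoid1 cov (show wagnerGraph.Adj 5 1 by decide)
      (hmem 5 d) (by rw [hL2 1])
    set g : ZMod 8 → W := fun v =>
      [d1, d1, d1, ev 3 a, ev 4 b, ev 5 d, ev 6 e, ev 7 f].getD v.val d1 with hg_def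
    have hg : ∀ v ∈ ({1, 3, 4, 5, 6, 7} : Finset (ZMod 8)), g v ∈ L v := by
      intro v hv
      fin_cases hv
      · exact hd1
      · exact hmem 3 a
      · exact hmem 4 b
      · exact hmem 5 d
      · exact hmem 6 e
      · exact hmem 7 f
    have n34 : ¬H.Adj (g 3) (g 4) := hnadj 3 4 k0 a b hk0 h0
    have n45 : ¬H.Adj (g 4) (g 5) := hnadj 4 5 k1 b d hk1 h1
    have n56 : ¬H.Adj (g 5) (g 6) := hnadj 5 6 k2 d e hk2 h2
    have n67 : ¬H.Adj (g 6) (g 7) := hnadj 6 7 k3 e f hk3 h3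
    have n37 : ¬H.Adj (g 3) (g 7) := hnadj 3 7 k4 a f hk4 h4
    have n51 : ¬H.Adj (g 5) (g 1) := h15
    have m34 : ¬H.Adj (g 4) (g 3) := fun h => n34 (H.adj_symm h)
    have m45 : ¬H.Adj (g 5) (g 4) := fun h => n45 (H.adj_symm h)
    have m56 : ¬H.Adj (g 6) (g 5) := fun h => n56 (H.adj_symm h)
    have m67 : ¬H.Adj (g 7) (g 6) := fun h => n67 (H.adj_symm h)
    have m37 : ¬H.Adj (g 7) (g 3) := fun h => n37 (H.adj_symm h)
    have m51 : ¬H.Adj (g 1) (g 5) := fun h => n51 (H.adj_symm h)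
    have hadj : ∀ u ∈ ({1, 3, 4, 5, 6, 7} : Finset (ZMod 8)),
        ∀ v ∈ ({1, 3, 4, 5, 6, 7} : Finset (ZMod 8)),
        wagnerGraph.Adj u v → ¬H.Adj (g u) (g v) := by
      intro u hu v hv hG
      fin_cases hu <;> fin_cases hv <;> first | exact absurd hG (by unfold wagnerGraph; decide) | assumption
    obtain ⟨hind, hcard⟩ := indep_of_choice cov {1, 3, 4, 5, 6, 7} g hg hadj
    exact ⟨_, hind, by rw [hcard]; decide⟩
  by_cases g1 : good5 k5 k1 k2 k3 k6 = true
  · -- cycle 0-4-5-6-7 with chord 0-7, pendant 2 at 6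
    obtain ⟨a, b, d, e, f, h0, h1, h2', h3, h4⟩ := good5_spec g1
    obtain ⟨d2, hd2, h26⟩ := exists_avoid1 cov (show wagnerGraph.Adj 6 2 by decide)
      (hmem 6 e) (by rw [hL2 2])
    set g : ZMod 8 → W := fun v =>
      [ev 0 a, d2, d2, d2, ev 4 b, ev 5 d, ev 6 e, ev 7 f].getD v.val d2 with hg_def
    have hg : ∀ v ∈ ({0, 2, 4, 5, 6, 7} : Finset (ZMod 8)), g v ∈ L v := by
      intro v hv
      fin_cases hv
      · exact hmem 0 a
      · exact hd2
      · exact hmem 4 b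
      · exact hmem 5 d
      · exact hmem 6 e
      · exact hmem 7 f
    have n04 : ¬H.Adj (g 0) (g 4) := hnadj 0 4 k5 a b hk5 h0
    have n45 : ¬H.Adj (g 4) (g 5) := hnadj 4 5 k1 b d hk1 h1
    have n56 : ¬H.Adj (g 5) (g 6) := hnadj 5 6 k2 d e hk2 h2'
    have n67 : ¬H.Adj (g 6) (g 7) := hnadj 6 7 k3 e f hk3 h3
    have n07 : ¬H.Adj (g 0) (g 7) := hnadj 0 7 k6 a f hk6 h4
    have n62 : ¬H.Adj (g 6) (g 2) := h26
    have m04 : ¬H.Adj (g 4) (g 0) := fun h => n04 (H.adj_symm h)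
    have m45 : ¬H.Adj (g 5) (g 4) := fun h => n45 (H.adj_symm h)
    have m56 : ¬H.Adj (g 6) (g 5) := fun h => n56 (H.adj_symm h)
    have m67 : ¬H.Adj (g 7) (g 6) := fun h => n67 (H.adj_symm h)
    have m07 : ¬H.Adj (g 7) (g 0) := fun h => n07 (H.adj_symm h)
    have m62 : ¬H.Adj (g 2) (g 6) := fun h => n62 (H.adj_symm h)
    have hadj : ∀ u ∈ ({0, 2, 4, 5, 6, 7} : Finset (ZMod 8)),
        ∀ v ∈ ({0, 2, 4, 5, 6, 7} : Finset (ZMod 8)),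
        wagnerGraph.Adj u v → ¬H.Adj (g u) (g v) := by
      intro u hu v hv hG
      fin_cases hu <;> fin_cases hv <;> first | exact absurd hG (by unfold wagnerGraph; decide) | assumption
    obtain ⟨hind, hcard⟩ := indep_of_choice cov {0, 2, 4, 5, 6, 7} g hg hadj
    exact ⟨_, hind, by rw [hcard]; decide⟩
  by_cases gC : good4 k5 k0 k4 k6 = true
  · -- cycle 0-4-3-7 ; pendants 1 at 0 and 6 at 7
    obtain ⟨a, b, d, e, h0, h1, h2', h3⟩ := good4_spec gC
    obtain ⟨d1, hd1, h01⟩ := exists_avoid1 cov (show wagnerGraph.Adj 0 1 by decide)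
      (hmem 0 a) (by rw [hL2 1])
    obtain ⟨d6, hd6, h76⟩ := exists_avoid1 cov (show wagnerGraph.Adj 7 6 by decide)
      (hmem 7 e) (by rw [hL2 6])
    set g : ZMod 8 → W := fun v =>
      [ev 0 a, d1, d1, ev 3 d, ev 4 b, d1, d6, ev 7 e].getD v.val d1 with hg_def
    have hg : ∀ v ∈ ({0, 1, 3, 4, 6, 7} : Finset (ZMod 8)), g v ∈ L v := by
      intro v hv
      fin_cases hv
      · exact hmem 0 a
      · exact hd1
      · exact hmem 3 d
      · exact hmem 4 b
      · exact hd6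
      · exact hmem 7 e
    have n04 : ¬H.Adj (g 0) (g 4) := hnadj 0 4 k5 a b hk5 h0
    have n34 : ¬H.Adj (g 3) (g 4) := hnadj 3 4 k0 d b hk0 h1
    have n37 : ¬H.Adj (g 3) (g 7) := hnadj 3 7 k4 d e hk4 h2'
    have n07 : ¬H.Adj (g 0) (g 7) := hnadj 0 7 k6 a e hk6 h3
    have n01 : ¬H.Adj (g 0) (g 1) := h01
    have n76 : ¬H.Adj (g 7) (g 6) := h76
    have m04 : ¬H.Adj (g 4) (g 0) := fun h => n04 (H.adj_symm h)
    have m34 : ¬H.Adj (g 4) (g 3) := fun h => n34 (H.adj_symm h)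
    have m37 : ¬H.Adj (g 7) (g 3) := fun h => n37 (H.adj_symm h)
    have m07 : ¬H.Adj (g 7) (g 0) := fun h => n07 (H.adj_symm h)
    have m01 : ¬H.Adj (g 1) (g 0) := fun h => n01 (H.adj_symm h)
    have m76 : ¬H.Adj (g 6) (g 7) := fun h => n76 (H.adj_symm h)
    have hadj : ∀ u ∈ ({0, 1, 3, 4, 6, 7} : Finset (ZMod 8)),
        ∀ v ∈ ({0, 1, 3, 4, 6, 7} : Finset (ZMod 8)),
        wagnerGraph.Adj u v → ¬H.Adj (g u) (g v) := by
      intro u hu v hv hG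
      fin_cases hu <;> fin_cases hv <;> first | exact absurd hG (by unfold wagnerGraph; decide) | assumption
    obtain ⟨hind, hcard⟩ := indep_of_choice cov {0, 1, 3, 4, 6, 7} g hg hadj
    exact ⟨_, hind, by rw [hcard]; decide⟩
  · exfalso
    have b0 : bad5 k0 k1 k2 k3 k4 = true := by
      have := lem5 k0 k1 k2 k3 k4
      rw [Bool.or_eq_true] at this
      tauto
    have b1 : bad5 k5 k1 k2 k3 k6 = true := by
      have := lem5 k5 k1 k2 k3 k6
      rw [Bool.or_eq_true] at this
      tauto
    have bC : bad4 k5 k0 k4 k6 = true := by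
      have := lem4 k5 k0 k4 k6
      rw [Bool.or_eq_true] at this
      tauto
    have p0 := bad5_spec b0
    have p1 := bad5_spec b1
    have pC := bad4_spec bC
    omega

end TwoFold

section Final

lemma exH_no8 {t : ℕ} (S : Finset (ZMod 8 × Fin t))
    (hS : IsIndepFinset (exH wagnerGraph t) S) (hcard : S.card = 8) :
    ∃ f : ZMod 8 → Fin t, ∀ u v, wagnerGraph.Adj u v → f u ≠ f v := by
  classical
  have hinj : Set.InjOn Prod.fst (S : Set (ZMod 8 × Fin t)) := by
    intro p hp q hq h
    by_contra hne
    exact hS p hp q hq (Or.inl ⟨h, fun h2 => hne (Prod.ext h h2)⟩)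
  have himg : (S.image Prod.fst).card = 8 := by
    rw [Finset.card_image_of_injOn hinj, hcard]
  have huniv : S.image Prod.fst = Finset.univ := by
    apply Finset.eq_univ_of_card
    rw [himg, ZMod.card]
  have hex : ∀ v : ZMod 8, ∃ i : Fin t, (v, i) ∈ S := by
    intro v
    have : v ∈ S.image Prod.fst := huniv ▸ Finset.mem_univ v
    obtain ⟨⟨v', i⟩, hp, hpv⟩ := Finset.mem_image.mp this
    have : v' = v := hpv
    subst this
    exact ⟨i, hp⟩
  choose f hf using hex
  refine ⟨f, fun u v huv heq => ?_⟩
  exact hS (u, f u) (hf u) (v, f v) (hf v) (Or.inr ⟨huv, heq⟩)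

lemma fin2_cycle' : ∀ a b c d e : Fin 2, ¬(a ≠ b ∧ b ≠ c ∧ c ≠ d ∧ d ≠ e ∧ e ≠ a) := by
  decide

lemma fin2_cycle : ∀ a b c d e : Fin 2, a ≠ b → b ≠ c → c ≠ d → d ≠ e → e ≠ a → False :=
  fun a b c d e h1 h2 h3 h4 h5 => fin2_cycle' a b c d e ⟨h1, h2, h3, h4, h5⟩

lemma chiDP_wagner : chiDP wagnerGraph = 3 := by
  classical
  rw [chiDP]
  set A := {m : ℕ | ∀ (W : Type) (_ : Fintype W) (H : SimpleGraph W) (L : ZMod 8 → Finset W),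
    DPCover wagnerGraph H L → (∀ v, (L v).card = m) →
    ∃ S : Finset W, IsIndepFinset H S ∧ S.card = Fintype.card (ZMod 8)} with hA
  have h3A : 3 ∈ A := by
    intro W instW H L cov hc
    obtain ⟨S, h1, h2⟩ := brooks3 cov hc
    exact ⟨S, h1, by rw [h2, ZMod.card]⟩
  have hbad : ∀ t : ℕ, t ≤ 2 → t ∉ A := by
    intro t ht hmem
    obtain ⟨S, hS, hcard⟩ := hmem (ZMod 8 × Fin t) inferInstance (exH wagnerGraph t) (exL t)
      (exCover wagnerGraph t) (fun v => exL_card t v)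
    rw [ZMod.card] at hcard
    obtain ⟨f, hf⟩ := exH_no8 S hS hcard
    have e34 := hf 3 4 (by decide)
    have e45 := hf 4 5 (by decide)
    have e56 := hf 5 6 (by decide)
    have e67 := hf 6 7 (by decide)
    have e73 := hf 7 3 (by decide)
    interval_cases t
    · exact (f 3).elim0
    · exact e34 (Subsingleton.elim _ _)
    · exact fin2_cycle (f 3) (f 4) (f 5) (f 6) (f 7) e34 e45 e56 e67 e73
  have hne : A.Nonempty := ⟨3, h3A⟩
  have hmem := Nat.sInf_mem hne
  have hle : sInf A ≤ 3 := Nat.sInf_le h3A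
  have : sInf A = 3 := by
    by_contra hne3
    have h2 : sInf A ≤ 2 := by omega
    exact hbad _ h2 hmem
  exact this

lemma alphaDP_mem {t : ℕ} :
    _root_.indepNum (exH wagnerGraph t) ∈ {n : ℕ | ∃ (W : Type) (_ : Fintype W) (H : SimpleGraph W)
      (L : ZMod 8 → Finset W), DPCover wagnerGraph H L ∧ (∀ v, (L v).card = t) ∧
      _root_.indepNum H = n} :=
  ⟨ZMod 8 × Fin t, inferInstance, exH wagnerGraph t, exL t, exCover wagnerGraph t,
    fun v => exL_card t v, rfl⟩

lemma alphaDP_wagner_ge (t m : ℕ)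
    (hlb : ∀ (W : Type) (_ : Fintype W) (H : SimpleGraph W) (L : ZMod 8 → Finset W),
      DPCover wagnerGraph H L → (∀ v, (L v).card = t) →
      ∃ S : Finset W, IsIndepFinset H S ∧ S.card = m) :
    m ≤ alphaDP wagnerGraph t := by
  rw [alphaDP]
  have hne : {n : ℕ | ∃ (W : Type) (_ : Fintype W) (H : SimpleGraph W)
      (L : ZMod 8 → Finset W), DPCover wagnerGraph H L ∧ (∀ v, (L v).card = t) ∧
      _root_.indepNum H = n}.Nonempty := ⟨_, alphaDP_mem⟩
  have hmem := Nat.sInf_mem hne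
  obtain ⟨W, instW, H, L, cov, hc, hn⟩ := hmem
  obtain ⟨S, hS, hcard⟩ := hlb W instW H L cov hc
  calc m = S.card := hcard.symm
    _ ≤ _root_.indepNum H := indepNum_ge H S hS
    _ = _ := hn

lemma alpha2_ge : 6 ≤ alphaDP wagnerGraph 2 :=
  alphaDP_wagner_ge 2 6 (fun W instW H L cov hc => two6 cov hc)

lemma alpha1_ge : 3 ≤ alphaDP wagnerGraph 1 :=
  alphaDP_wagner_ge 1 3 (fun W instW H L cov hc => one3 cov (fun v => by rw [hc v]))

lemma alpha3_ge : 8 ≤ alphaDP wagnerGraph 3 :=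
  alphaDP_wagner_ge 3 8 (fun W instW H L cov hc => brooks3 cov hc)

end Final

/-- `α₂^{DP}(V₈) ≥ 6`, and `V₈` is partially DP-nice. -/
theorem wagnerGraph_partiallyDPNice :
    6 ≤ alphaDP wagnerGraph 2 ∧ PartiallyDPNice wagnerGraph := by
  refine ⟨alpha2_ge, ?_⟩
  intro t ht1 ht3
  rw [chiDP_wagner] at ht3 ⊢
  rw [ZMod.card]
  interval_cases t
  · have h := alpha1_ge
    have : (3 : ℚ) ≤ (alphaDP wagnerGraph 1 : ℚ) := by exact_mod_cast h
    norm_num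
    linarith
  · have h := alpha2_ge
    have : (6 : ℚ) ≤ (alphaDP wagnerGraph 2 : ℚ) := by exact_mod_cast h
    norm_num
    linarith
  · have h := alpha3_ge
    have : (8 : ℚ) ≤ (alphaDP wagnerGraph 3 : ℚ) := by exact_mod_cast h
    norm_num
    linarith
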